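/- Let C be a category with all morphisms monic that admits a universal homogeneous ind-object Ω, and let X be an object of C. Then the coslice category X/C (objects: morphisms X → Y; morphisms: commuting triangles) also admits a universal homogeneous ind-object; specifically, for any embedding α : X → Ω_1, the ind-object (Ω_n, α_n) with α_n the composite of α and the transition maps is universal and f-injective in X/C. -/

import Mathlib

open CategoryTheory

universe u v

/-- An ind-object of a category `C`: a sequential diagram `X₁ → X₂ → ⋯` in `C`. -/
structure IndObject (C : Type u) [Category.{v} C] where
  obj : ℕ → C
  map : ∀ n : ℕ, obj n ⟶ obj (n + 1)

namespace IndObject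

variable {C : Type u} [Category.{v} C]

/-- The transition morphism `obj n ⟶ obj m` of an ind-object, for `n ≤ m`. -/
def trans (Ω : IndObject C) : ∀ {n m : ℕ}, n ≤ m → (Ω.obj n ⟶ Ω.obj m) :=
  fun {n m} h =>
    Nat.leRecOn (C := fun m => Ω.obj n ⟶ Ω.obj m) h (fun {l} g => g ≫ Ω.map l) (𝟙 _)

/-- An ind-object is universal if every object of `C` embeds into it. -/
def Universal (Ω : IndObject C) : Prop :=
  ∀ X : C, ∃ n : ℕ, Nonempty (X ⟶ Ω.obj n)

/-- An ind-object is f-injective if every embedding of an object of `C` into it extends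
along any morphism of `C`. -/
def FInjective (Ω : IndObject C) : Prop :=
  ∀ ⦃X Y : C⦄ (α : X ⟶ Y) (n : ℕ) (γ : X ⟶ Ω.obj n),
    ∃ (m : ℕ) (h : n ≤ m) (β : Y ⟶ Ω.obj m), α ≫ β = γ ≫ Ω.trans h

end IndObject


theorem IndObject.trans_le_succ {C : Type u} [Category.{v} C] (Ω : IndObject C)
    {n m : ℕ} (h : n ≤ m) (h' : n ≤ m + 1) :
    Ω.trans h' = Ω.trans h ≫ Ω.map m := by
  simp only [IndObject.trans]
  exact Nat.leRecOn_succ h _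

/-- The ind-object of the coslice category `X/C` determined by a universal homogeneous
ind-object `Ω` of `C` and an embedding `α : X → Ω₁`. -/
def coslice {C : Type u} [Category.{v} C] (Ω : IndObject C) {X : C}
    (α : X ⟶ Ω.obj 0) : IndObject (CategoryTheory.Under X) where
  obj n := CategoryTheory.Under.mk (α ≫ Ω.trans (Nat.zero_le n))
  map n := CategoryTheory.Under.homMk (Ω.map n) (by
    simp only [CategoryTheory.Under.mk_hom, Category.assoc]
    rw [← Ω.trans_le_succ (Nat.zero_le n) (Nat.zero_le (n + 1))])

/-- if `C` (all morphisms monic) has a universal homogeneous ind-object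
`Ω`, then for any object `X` and any embedding `α : X → Ω₁` the induced ind-object of
the coslice category `X/C` is universal and f-injective (hence universal homogeneous);
in particular `X/C` admits a universal homogeneous ind-object. -/
theorem IndObject.trans_self {C : Type u} [Category.{v} C] (Ω : IndObject C)
    (n : ℕ) (h : n ≤ n) : Ω.trans h = 𝟙 _ := by
  simp only [IndObject.trans]
  exact Nat.leRecOn_self _

theorem IndObject.trans_trans {C : Type u} [Category.{v} C] (Ω : IndObject C)
    {n m k : ℕ} (h1 : n ≤ m) (h2 : m ≤ k) (h3 : n ≤ k) :
    Ω.trans h1 ≫ Ω.trans h2 = Ω.trans h3 := by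
  induction h2 with
  | refl => rw [Ω.trans_self, Category.comp_id]
  | @step k h2 ih =>
      rw [Ω.trans_le_succ h2 (Nat.le_succ_of_le h2),
        Ω.trans_le_succ (h1.trans h2) h3, ← ih (h1.trans h2), Category.assoc]

theorem coslice_trans_right {C : Type u} [Category.{v} C] (Ω : IndObject C) {X : C}
    (α : X ⟶ Ω.obj 0) {n m : ℕ} (h : n ≤ m) :
    ((coslice Ω α).trans h).right = Ω.trans h := by
  induction h with
  | refl => rw [(coslice Ω α).trans_self, Ω.trans_self]; rfl
  | @step k h ih =>
      rw [(coslice Ω α).trans_le_succ h (Nat.le_succ_of_le h),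
        Ω.trans_le_succ h (Nat.le_succ_of_le h)]
      simp only [CategoryTheory.Under.comp_right, ih]
      rfl

theorem stmt_14 (C : Type u) [Category.{v} C]
    (hmono : ∀ {A B : C} (f : A ⟶ B), Mono f)
    (Ω : IndObject C) (huniv : Ω.Universal) (hfinj : Ω.FInjective)
    (X : C) (α : X ⟶ Ω.obj 0) :
    (coslice Ω α).Universal ∧ (coslice Ω α).FInjective := by
  constructor
  · intro Y
    obtain ⟨m, h, β, hβ⟩ := hfinj Y.hom 0 α
    refine ⟨m, ⟨CategoryTheory.Under.homMk β ?_⟩⟩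
    exact hβ
  · intro Y Z f n γ
    obtain ⟨m, h, β, hβ⟩ := hfinj f.right n γ.right
    have hZ : Z.hom ≫ β = α ≫ Ω.trans (Nat.zero_le m) := by
      have hw : Y.hom ≫ f.right = Z.hom := CategoryTheory.Under.w f
      have hw' : Y.hom ≫ γ.right = α ≫ Ω.trans (Nat.zero_le n) :=
        CategoryTheory.Under.w γ
      rw [← hw, Category.assoc, hβ]
      exact (Category.assoc _ _ _).symm.trans ((congrArg (· ≫ Ω.trans h) hw').trans
        ((Category.assoc _ _ _).trans
          (congrArg (α ≫ ·) (Ω.trans_trans (Nat.zero_le n) h (Nat.zero_le m)))))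
    refine ⟨m, h, CategoryTheory.Under.homMk β hZ, ?_⟩
    ext
    simp [coslice_trans_right]
    exact hβ
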